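/- Suppose q is an odd prime power and n is an even positive integer. Let a_1, …, a_n be an F_q-basis of F_{q^n}. Then the determinant det((Tr(a_i a_j))_{1 ≤ i,j ≤ n}) of the Gram matrix of the trace bilinear form is a nonzero non-square element of F_q. -/

import Mathlib

/-- The trace map of `F_{q^n}/F_q`, written explicitly as
`Tr(x) = x + x^q + ⋯ + x^{q^{n-1}}` (valued in the big field). -/
def qTr {K : Type*} [CommRing K] (q n : ℕ) (x : K) : K :=
  ∑ i ∈ Finset.range n, x ^ q ^ i

/-- For `q` odd and `n` even, the determinant of the Gram matrix
`(Tr(aᵢ aⱼ))_{i,j}` of the trace bilinear form in an `F_q`-basis `a₁, …, aₙ` of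
`F_{q^n}` is a nonzero non-square element of `F_q`. -/
theorem det_trace_gram_nonsquare
    {F K : Type*} [Field F] [Fintype F] [Field K] [Fintype K] [Algebra F K]
    {n : ℕ} (hq : Odd (Fintype.card F)) (hn : Module.finrank F K = n)
    (hne : Even n) (hn0 : 0 < n)
    (b : Module.Basis (Fin n) F K) (d : F)
    (hd : algebraMap F K d
      = (Matrix.of fun i j : Fin n => qTr (Fintype.card F) n (b i * b j)).det) :
    d ≠ 0 ∧ ¬ IsSquare d := by
  classical
  set q := Fintype.card F with hqdef
  have hq2 : 2 ≤ q := Fintype.one_lt_card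
  -- characteristic plumbing
  set p := ringChar F with hpdef
  obtain ⟨a, hpp, hcard⟩ := FiniteField.card F p
  haveI : CharP K p := charP_of_injective_algebraMap (algebraMap F K).injective p
  haveI : Fact p.Prime := ⟨hpp⟩
  have hpne2 : p ≠ 2 := by
    intro h2
    rw [hqdef, hcard, h2] at hq
    exact absurd hq (Nat.not_odd_iff_even.mpr (Nat.even_pow.mpr ⟨even_two, a.pos.ne'⟩))
  have hK : Fintype.card K = q ^ n := by
    rw [Module.card_fintype b, Fintype.card_fin, hqdef]
  have hadd : ∀ (k : ℕ) (x y : K), (x + y) ^ q ^ k = x ^ q ^ k + y ^ q ^ k := by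
    intro k x y
    rw [hqdef, hcard, ← pow_mul]
    exact add_pow_char_pow x y p _
  have hpowF : ∀ (k : ℕ) (c : F), algebraMap F K c ^ q ^ k = algebraMap F K c := by
    intro k c
    rw [← map_pow, hqdef, FiniteField.pow_card_pow]
  have hKpow : ∀ x : K, x ^ q ^ n = x := by
    intro x
    rw [← hK, FiniteField.pow_card]
  -- the conjugate matrix
  set A : Matrix (Fin n) (Fin n) K :=
    Matrix.of (fun k i : Fin n => b i ^ q ^ (k : ℕ)) with hA
  -- Gram = A.transpose * A
  have hGram : (Matrix.of fun i j : Fin n => qTr q n (b i * b j)) = A.transpose * A := by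
    ext i j
    simp only [Matrix.of_apply, Matrix.mul_apply, Matrix.transpose_apply, hA, qTr, mul_pow]
    exact (Fin.sum_univ_eq_sum_range _ n).symm
  have hdet : algebraMap F K d = A.det * A.det := by
    rw [hd, hGram, Matrix.det_mul, Matrix.det_transpose]
  -- A.det ≠ 0
  have hdetA : A.det ≠ 0 := by
    intro h0
    obtain ⟨c, hc0, hc⟩ := Matrix.exists_vecMul_eq_zero_iff.mpr h0
    have hcb : ∀ i, ∑ k : Fin n, c k * b i ^ q ^ (k : ℕ) = 0 := by
      intro i
      have := congrFun hc i
      simpa [Matrix.vecMul, dotProduct, hA] using this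
    -- the F-linear map x ↦ ∑ k, c k * x ^ q ^ k
    set L : K →ₗ[F] K :=
      { toFun := fun x => ∑ k : Fin n, c k * x ^ q ^ (k : ℕ)
        map_add' := by
          intro x y
          simp [hadd, mul_add, Finset.sum_add_distrib]
        map_smul' := by
          intro m x
          simp only [Algebra.smul_def, mul_pow, hpowF, RingHom.id_apply, Finset.mul_sum]
          exact Finset.sum_congr rfl fun k _ => by ring } with hL
    have hL0 : L = 0 := b.ext fun i => by simpa [hL] using hcb i
    have hLx : ∀ x : K, ∑ k : Fin n, c k * x ^ q ^ (k : ℕ) = 0 := by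
      intro x
      have := LinearMap.congr_fun hL0 x
      simpa [hL] using this
    set P : Polynomial K :=
      ∑ k : Fin n, Polynomial.C (c k) * Polynomial.X ^ q ^ (k : ℕ) with hP
    have heval : ∀ x : K, P.eval x = 0 := by
      intro x
      simpa [hP, Polynomial.eval_finset_sum] using hLx x
    have hdeg : P.natDegree < Fintype.card K := by
      rw [hK]
      have h1 : P.natDegree ≤ q ^ (n - 1) :=
        Polynomial.natDegree_sum_le_of_forall_le _ _ fun k _ =>
          (Polynomial.natDegree_C_mul_le _ _).trans <|
            (Polynomial.natDegree_X_pow _).le.trans <|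
            Nat.pow_le_pow_right (by omega) (Nat.le_sub_one_of_lt k.isLt)
      exact lt_of_le_of_lt h1 (Nat.pow_lt_pow_right (by omega) (by omega))
    have hP0 : P = 0 :=
      Polynomial.eq_zero_of_natDegree_lt_card_of_eval_eq_zero P
        Function.injective_id (fun x => heval x) (by simpa using hdeg)
    apply hc0
    funext k
    have := congrArg (fun r => Polynomial.coeff r (q ^ (k : ℕ))) hP0
    simp only [hP, Polynomial.finset_sum_coeff, Polynomial.coeff_C_mul,
      Polynomial.coeff_X_pow, Polynomial.coeff_zero, mul_ite, mul_one, mul_zero] at this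
    rw [Finset.sum_eq_single k] at this
    · simpa using this
    · intro j _ hjk
      rw [if_neg fun h => hjk (Fin.val_injective (Nat.pow_right_injective hq2 (by simpa using h))).symm]
    · intro h
      exact absurd (Finset.mem_univ k) h
  -- the Frobenius x ↦ x ^ q as a ring hom
  let φ : K →+* K :=
    { toFun := fun x => x ^ q
      map_one' := one_pow q
      map_mul' := fun x y => mul_pow x y q
      map_zero' := zero_pow (by omega)
      map_add' := fun x y => by simpa using hadd 1 x y }
  obtain ⟨m, rfl⟩ : ∃ m, n = m + 1 := ⟨n - 1, (Nat.succ_pred_eq_of_pos hn0).symm⟩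
  have hmodd : Odd m := Nat.not_even_iff_odd.mp (Nat.even_add_one.mp hne)
  have hmap : A.map φ = A.submatrix (finRotate (m + 1)) id := by
    ext k i
    simp only [Matrix.map_apply, Matrix.submatrix_apply, hA, Matrix.of_apply, id_eq,
      finRotate_succ_apply]
    show (b i ^ q ^ (k : ℕ)) ^ q = _
    rw [← pow_mul, ← pow_succ]
    by_cases hk : k = Fin.last m
    · subst hk
      simp only [Fin.val_last]
      rw [hKpow (b i)]
      norm_num [Fin.val_add_one]
    · rw [Fin.val_add_one, if_neg hk]
  have hfrob : A.det ^ q = -A.det := by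
    have h1 : φ A.det = (A.map φ).det := RingHom.map_det φ A
    rw [hmap, Matrix.det_permute, sign_finRotate] at h1
    exact (show φ A.det = -A.det by simpa [hmodd.neg_one_pow] using h1)
  have h2ne : (2 : K) ≠ 0 := by
    have hnd : ¬ (p ∣ 2) := fun h =>
      hpne2 ((Nat.prime_dvd_prime_iff_eq hpp Nat.prime_two).mp h)
    intro h
    exact hnd ((CharP.cast_eq_zero_iff K p 2).mp (by exact_mod_cast h))
  have hdetfix : A.det = -A.det → False := by
    intro h
    have h2 : (2 : K) * A.det = 0 := by
      rw [two_mul]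
      exact add_eq_zero_iff_eq_neg.mpr h
    rcases mul_eq_zero.mp h2 with h3 | h3
    · exact h2ne h3
    · exact hdetA h3
  have h1e : ∀ e : F, algebraMap F K e ^ q = algebraMap F K e := by
    intro e
    have h1 := hpowF 1 e
    rwa [pow_one] at h1
  refine ⟨?_, ?_⟩
  · intro h0
    rw [h0, map_zero] at hdet
    exact hdetA (mul_self_eq_zero.mp hdet.symm)
  · rintro ⟨e, he⟩
    rw [he, map_mul] at hdet
    rcases mul_self_eq_mul_self_iff.mp hdet with h | h
    · have hfix : A.det ^ q = A.det := by rw [← h, h1e]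
      exact hdetfix (hfix.symm.trans hfrob)
    · have hde : A.det = -(algebraMap F K e) := by rw [h]; ring
      have hfix : A.det ^ q = A.det := by
        rw [hde, hq.neg_pow, h1e]
      exact hdetfix (hfix.symm.trans hfrob)
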